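/- Let c > 1, α ∈ (1,2) and let θ be an admissible function with respect to c and α. Define γ(x) := e^{(α−1)x} ∫_{e^x}^∞ y^{−α} θ(log y) dy for x ∈ ℝ. Then for every y > 0 one has ∫_y^∞ x^{−α} θ(log x) dx = y^{1−α} γ(log y), and γ is a continuous admissible function with respect to c and α: γ is continuous, strictly positive, log(c^{1/α})-periodic, and satisfies γ(y+δ) ≤ e^{αδ} γ(y) for all y ∈ ℝ and δ ≥ 0. -/

import Mathlib

open MeasureTheory Real Filter Set

noncomputable section

/-- A function `θ : ℝ → (0,∞)` is admissible w.r.t. `c` and `α` if it is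
`log (c^(1/α))`-periodic and satisfies the growth restriction
`θ (y+δ) ≤ exp (α δ) * θ y` for all `y` and `δ ≥ 0`. -/
def IsAdmissible (c α : ℝ) (θ : ℝ → ℝ) : Prop :=
  (∀ x, 0 < θ x) ∧
  Function.Periodic θ (Real.log (c ^ (1 / α))) ∧
  ∀ y δ : ℝ, 0 ≤ δ → θ (y + δ) ≤ Real.exp (α * δ) * θ y


lemma theta_meas {α : ℝ} {θ : ℝ → ℝ} (hpos : ∀ x, 0 < θ x) (hα : 0 < α)
    (hgrow : ∀ y δ : ℝ, 0 ≤ δ → θ (y + δ) ≤ Real.exp (α * δ) * θ y) :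
    Measurable θ := by
  have hanti : Antitone (fun y => Real.log (θ y) - α * y) := by
    intro a b hab
    have h := hgrow a (b - a) (by linarith)
    rw [add_sub_cancel] at h
    have h2 : Real.log (θ b) ≤ α * (b - a) + Real.log (θ a) := by
      calc Real.log (θ b) ≤ Real.log (Real.exp (α * (b-a)) * θ a) :=
        Real.log_le_log (hpos b) h
      _ = α * (b - a) + Real.log (θ a) := by
          rw [Real.log_mul (Real.exp_ne_zero _) (hpos a).ne', Real.log_exp]
    simp only [sub_le_sub_iff]
    nlinarith
  have : θ = fun y => Real.exp ((Real.log (θ y) - α * y) + α * y) := by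
    funext y; simp [Real.exp_log (hpos y)]
  rw [this]
  exact (hanti.measurable.add (measurable_const.mul measurable_id)).exp

lemma p_pos {c α : ℝ} (hc : 1 < c) (hα : 0 < α) : 0 < Real.log (c ^ (1 / α)) :=
  Real.log_pos (Real.one_lt_rpow_iff_of_pos (by linarith) |>.mpr (Or.inl ⟨hc, by positivity⟩))

lemma theta_bdd {c α : ℝ} {θ : ℝ → ℝ} (hc : 1 < c) (hα : 0 < α) (hpos : ∀ x, 0 < θ x)
    (hper : Function.Periodic θ (Real.log (c ^ (1 / α))))
    (hgrow : ∀ y δ : ℝ, 0 ≤ δ → θ (y + δ) ≤ Real.exp (α * δ) * θ y) :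
    ∀ x : ℝ, θ x ≤ Real.exp (α * Real.log (c ^ (1 / α))) * θ 0 := by
  set p := Real.log (c ^ (1 / α)) with hpdef
  have hp : 0 < p := p_pos hc hα
  intro x
  set n : ℤ := ⌊x / p⌋ with hn
  have hr0 : 0 ≤ x - n * p := by
    have h1 := Int.floor_le (x / p)
    rw [sub_nonneg]
    calc (n : ℝ) * p ≤ (x / p) * p := mul_le_mul_of_nonneg_right h1 hp.le
    _ = x := by field_simp
  have hr1 : x - n * p ≤ p := by
    have h2 : x / p < n + 1 := Int.lt_floor_add_one (x / p)
    nlinarith [(div_lt_iff₀ hp).mp h2]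
  have heq : θ x = θ (x - n * p) := (hper.sub_int_mul_eq n).symm
  rw [heq]
  have h3 := hgrow 0 (x - n * p) hr0
  rw [zero_add] at h3
  calc θ (x - n * p) ≤ Real.exp (α * (x - n * p)) * θ 0 := h3
  _ ≤ Real.exp (α * p) * θ 0 :=
      mul_le_mul_of_nonneg_right (Real.exp_le_exp.mpr (by nlinarith)) (hpos 0).le

lemma int_on {α : ℝ} {θ : ℝ → ℝ} {M : ℝ} (hα : 1 < α) (hmeas : Measurable θ)
    (hpos : ∀ x, 0 < θ x) (hM : ∀ x, θ x ≤ M) {t : ℝ} (ht : 0 < t) :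
    IntegrableOn (fun y => y ^ (-α) * θ (Real.log y)) (Ioi t) := by
  have hmf : AEStronglyMeasurable (fun y : ℝ => y ^ (-α) * θ (Real.log y))
      (volume.restrict (Ioi t)) := by
    have h1 : ContinuousOn (fun y : ℝ => y ^ (-α)) (Ioi t) := fun y hy =>
      (Real.continuousAt_rpow_const y (-α) (Or.inl (ht.trans hy).ne')).continuousWithinAt
    exact (h1.aestronglyMeasurable measurableSet_Ioi).mul
      ((hmeas.comp Real.measurable_log).aestronglyMeasurable.restrict)
  have hint : IntegrableOn (fun y : ℝ => M * y ^ (-α)) (Ioi t) :=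
    (integrableOn_Ioi_rpow_of_lt (by linarith) ht).const_mul M
  refine Integrable.mono' hint hmf ?_
  filter_upwards [ae_restrict_mem measurableSet_Ioi] with y hy
  have hy0 : 0 < y := ht.trans hy
  have h1 : 0 < y ^ (-α) := Real.rpow_pos_of_pos hy0 _
  rw [Real.norm_eq_abs, abs_of_nonneg (mul_nonneg h1.le (hpos _).le)]
  calc y ^ (-α) * θ (Real.log y) ≤ y ^ (-α) * M :=
    mul_le_mul_of_nonneg_left (hM _) h1.le
  _ = M * y ^ (-α) := mul_comm _ _

lemma subst {α : ℝ} (θ : ℝ → ℝ) (δ x : ℝ) :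
    (∫ y in Ioi (Real.exp (x + δ)), y ^ (-α) * θ (Real.log y)) =
      Real.exp ((1 - α) * δ) * ∫ z in Ioi (Real.exp x), z ^ (-α) * θ (Real.log z + δ) := by
  have hb : 0 < Real.exp δ := Real.exp_pos δ
  have h0 := integral_comp_mul_left_Ioi (fun y => y ^ (-α) * θ (Real.log y)) (Real.exp x) hb
  have hx : Real.exp δ * Real.exp x = Real.exp (x + δ) := by
    rw [← Real.exp_add]; ring_nf
  rw [hx] at h0
  have h1 : ∀ z ∈ Ioi (Real.exp x),
      (Real.exp δ * z) ^ (-α) * θ (Real.log (Real.exp δ * z))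
        = Real.exp (-α * δ) * (z ^ (-α) * θ (Real.log z + δ)) := by
    intro z hz
    have hz0 : 0 < z := (Real.exp_pos x).trans hz
    rw [Real.mul_rpow hb.le hz0.le, Real.log_mul (Real.exp_ne_zero δ) hz0.ne',
      Real.log_exp, Real.rpow_def_of_pos hb, Real.log_exp]
    ring_nf
  rw [setIntegral_congr_fun measurableSet_Ioi h1, integral_const_mul, smul_eq_mul] at h0
  have h2 : (∫ y in Ioi (Real.exp (x + δ)), y ^ (-α) * θ (Real.log y))
      = Real.exp δ * (Real.exp (-α * δ) * ∫ z in Ioi (Real.exp x), z ^ (-α) * θ (Real.log z + δ)) := by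
    rw [h0]; field_simp
  rw [h2, ← mul_assoc, ← Real.exp_add]
  congr 2
  ring

theorem stmt0 (c α : ℝ) (hc : 1 < c) (hα : α ∈ Set.Ioo (1 : ℝ) 2)
    (θ : ℝ → ℝ) (hθ : IsAdmissible c α θ)
    (γ : ℝ → ℝ)
    (hγ : ∀ x : ℝ,
      γ x = Real.exp ((α - 1) * x) * ∫ y in Set.Ioi (Real.exp x), y ^ (-α) * θ (Real.log y)) :
    (∀ y : ℝ, 0 < y →
      ∫ x in Set.Ioi y, x ^ (-α) * θ (Real.log x) = y ^ (1 - α) * γ (Real.log y)) ∧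
    Continuous γ ∧ IsAdmissible c α γ := by
  obtain ⟨hpos, hper, hgrow⟩ := hθ
  have hα1 : 1 < α := hα.1
  have hα0 : 0 < α := by linarith
  have hmeas := theta_meas hpos hα0 hgrow
  have hbdd := theta_bdd hc hα0 hpos hper hgrow
  set p := Real.log (c ^ (1 / α)) with hpdef
  have hint0 : ∀ t : ℝ, 0 < t →
      IntegrableOn (fun y => y ^ (-α) * θ (Real.log y)) (Ioi t) :=
    fun t ht => int_on hα1 hmeas hpos hbdd ht
  have hint : ∀ (δ t : ℝ), 0 < t →
      IntegrableOn (fun y => y ^ (-α) * θ (Real.log y + δ)) (Ioi t) := by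
    intro δ t ht
    exact int_on hα1 (hmeas.comp (measurable_add_const δ)) (fun u => hpos _)
      (fun u => hbdd _) ht
  -- Part 1
  have part1 : ∀ y : ℝ, 0 < y →
      ∫ x in Set.Ioi y, x ^ (-α) * θ (Real.log x) = y ^ (1 - α) * γ (Real.log y) := by
    intro y hy
    rw [hγ (Real.log y), Real.exp_log hy, ← mul_assoc]
    have h1 : y ^ (1 - α) * Real.exp ((α - 1) * Real.log y) = 1 := by
      rw [Real.rpow_def_of_pos hy, ← Real.exp_add]
      have : Real.log y * (1 - α) + (α - 1) * Real.log y = 0 := by ring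
      rw [this, Real.exp_zero]
    rw [h1, one_mul]
  -- Continuity
  have hcont : Continuous γ := by
    rw [continuous_iff_continuousAt]
    intro x0
    set F : ℝ → ℝ := fun t => ∫ y in Ioi t, y ^ (-α) * θ (Real.log y) with hF
    set t0 := Real.exp x0 with ht0def
    have ht0 : 0 < t0 := Real.exp_pos x0
    have hFeq : ∀ t ∈ Ioi (t0 / 2),
        F t = F (t0 / 2) - ∫ u in (t0 / 2)..t, u ^ (-α) * θ (Real.log u) := by
      intro t ht
      have hle : t0 / 2 ≤ t := le_of_lt ht
      have htpos : 0 < t := lt_of_le_of_lt (by positivity) ht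
      have hsplit : F (t0 / 2) =
          (∫ u in Ioc (t0 / 2) t, u ^ (-α) * θ (Real.log u)) + F t := by
        rw [hF]
        rw [← setIntegral_union (Set.Ioc_disjoint_Ioi le_rfl) measurableSet_Ioi
          ((hint0 (t0 / 4) (by positivity)).mono_set
            (fun u hu => lt_trans (show t0 / 4 < t0 / 2 by linarith) hu.1))
          (hint0 t htpos)]
        rw [Set.Ioc_union_Ioi_eq_Ioi hle]
      rw [intervalIntegral.integral_of_le hle]
      linarith [hsplit]
    have hprim : ContinuousAt
        (fun t => ∫ u in (t0 / 2)..t, u ^ (-α) * θ (Real.log u)) t0 := by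
      have hi : IntegrableOn (fun u => u ^ (-α) * θ (Real.log u))
          (uIcc (t0 / 2) (2 * t0)) := by
        refine (hint0 (t0 / 4) (by positivity)).mono_set ?_
        rw [uIcc_of_le (by linarith)]
        intro u hu
        exact lt_of_lt_of_le (show t0 / 4 < t0 / 2 by linarith) hu.1
      refine (intervalIntegral.continuousOn_primitive_interval hi).continuousAt ?_
      rw [uIcc_of_le (by linarith)]
      exact Icc_mem_nhds (by linarith) (by linarith)
    have hFcont : ContinuousAt F t0 := by
      have hev : F =ᶠ[nhds t0]
          fun t => F (t0 / 2) - ∫ u in (t0 / 2)..t, u ^ (-α) * θ (Real.log u) := by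
        filter_upwards [isOpen_Ioi.mem_nhds (show t0 / 2 < t0 by linarith)] with t ht
        exact hFeq t ht
      exact (continuousAt_const.sub hprim).congr hev.symm
    have hγeq : γ = fun x => Real.exp ((α - 1) * x) * F (Real.exp x) := funext hγ
    rw [hγeq]
    exact ((Real.continuous_exp.comp (continuous_const.mul continuous_id)).continuousAt).mul
      (hFcont.comp (g := F) Real.continuous_exp.continuousAt)
  -- positivity
  have hγpos : ∀ x, 0 < γ x := by
    intro x
    rw [hγ x]
    apply mul_pos (Real.exp_pos _)
    have hii := hint0 (Real.exp x) (Real.exp_pos x)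
    have hnn : 0 ≤ᵐ[volume.restrict (Ioi (Real.exp x))]
        fun y => y ^ (-α) * θ (Real.log y) := by
      filter_upwards [ae_restrict_mem measurableSet_Ioi] with y hy
      exact mul_nonneg (Real.rpow_nonneg ((Real.exp_pos x).trans hy).le _) (hpos _).le
    rw [setIntegral_pos_iff_support_of_nonneg_ae hnn hii]
    have hsub : Ioi (Real.exp x) ⊆
        Function.support (fun y => y ^ (-α) * θ (Real.log y)) ∩ Ioi (Real.exp x) := by
      intro y hy
      refine ⟨?_, hy⟩
      have hy0 : 0 < y := (Real.exp_pos x).trans hy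
      exact ne_of_gt (mul_pos (Real.rpow_pos_of_pos hy0 _) (hpos _))
    refine lt_of_lt_of_le ?_ (measure_mono hsub)
    rw [Real.volume_Ioi]
    exact ENNReal.zero_lt_top
  -- periodicity
  have hγper : Function.Periodic γ p := by
    intro x
    rw [hγ (x + p), hγ x, subst θ p x]
    have hco : ∀ z ∈ Ioi (Real.exp x),
        z ^ (-α) * θ (Real.log z + p) = z ^ (-α) * θ (Real.log z) := by
      intro z hz
      rw [hper (Real.log z)]
    rw [setIntegral_congr_fun measurableSet_Ioi hco, ← mul_assoc, ← Real.exp_add]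
    congr 2
    ring
  -- growth
  have hγgrow : ∀ y δ : ℝ, 0 ≤ δ → γ (y + δ) ≤ Real.exp (α * δ) * γ y := by
    intro y δ hδ
    rw [hγ (y + δ), hγ y, subst θ δ y]
    have hmono : (∫ z in Ioi (Real.exp y), z ^ (-α) * θ (Real.log z + δ))
        ≤ ∫ z in Ioi (Real.exp y), Real.exp (α * δ) * (z ^ (-α) * θ (Real.log z)) := by
      refine setIntegral_mono_on (hint δ _ (Real.exp_pos y))
        ((hint0 _ (Real.exp_pos y)).const_mul _) measurableSet_Ioi ?_
      intro z hz
      have hz0 : 0 < z := (Real.exp_pos y).trans hz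
      calc z ^ (-α) * θ (Real.log z + δ)
          ≤ z ^ (-α) * (Real.exp (α * δ) * θ (Real.log z)) :=
            mul_le_mul_of_nonneg_left (hgrow (Real.log z) δ hδ)
              (Real.rpow_pos_of_pos hz0 _).le
        _ = Real.exp (α * δ) * (z ^ (-α) * θ (Real.log z)) := by ring
    rw [integral_const_mul] at hmono
    have hL : Real.exp ((α - 1) * (y + δ)) *
        (Real.exp ((1 - α) * δ) * ∫ z in Ioi (Real.exp y), z ^ (-α) * θ (Real.log z + δ))
        = Real.exp ((α - 1) * y) * ∫ z in Ioi (Real.exp y), z ^ (-α) * θ (Real.log z + δ) := by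
      rw [← mul_assoc, ← Real.exp_add]
      congr 2
      ring
    rw [hL]
    calc Real.exp ((α - 1) * y) * ∫ z in Ioi (Real.exp y), z ^ (-α) * θ (Real.log z + δ)
        ≤ Real.exp ((α - 1) * y) *
          (Real.exp (α * δ) * ∫ z in Ioi (Real.exp y), z ^ (-α) * θ (Real.log z)) :=
          mul_le_mul_of_nonneg_left hmono (Real.exp_pos _).le
      _ = Real.exp (α * δ) *
          (Real.exp ((α - 1) * y) * ∫ z in Ioi (Real.exp y), z ^ (-α) * θ (Real.log z)) := by
          ring
  exact ⟨part1, hcont, hγpos, hγper, hγgrow⟩
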